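/- Let c > 0 and K₀ be the absolute constants from the L²-flattening lemma. Let p be a prime, η a symmetric probability measure on SL₂(𝔽_p), and K a real number with K₀ ≤ K < p^{1/10}, such that η(gH) < K^{-1} for every proper subgroup H of SL₂(𝔽_p) and every g ∈ SL₂(𝔽_p). Then for every ℓ ∈ ℕ, ‖η^{(2^ℓ)}‖₂ ≤ K^{-c·ℓ} · ‖η‖₂ + K · p^{-3/2}. -/
import Mathlib


open scoped Classical

/-- Convolution of two real functions on a finite group:
`(f₁ ∗ f₂)(x) = ∑_h f₁(h)·f₂(h⁻¹x)`. -/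
noncomputable def conv {G : Type*} [Group G] [Fintype G] (f₁ f₂ : G → ℝ) : G → ℝ :=
  fun x => ∑ h, f₁ h * f₂ (h⁻¹ * x)

/-- The `ℓ`-fold convolution `f^{(ℓ)}` of `f` with itself (with `f^{(0)}` the point
mass at the identity, so that `f^{(1)} = f`). -/
noncomputable def iterConv {G : Type*} [Group G] [Fintype G] (f : G → ℝ) : ℕ → G → ℝ
  | 0 => fun x => if x = 1 then 1 else 0
  | n + 1 => conv (iterConv f n) f

/-- `‖f‖₂ = (∑_g f(g)²)^{1/2}`. -/
noncomputable def l2Norm {G : Type*} [Fintype G] (f : G → ℝ) : ℝ :=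
  Real.sqrt (∑ g, f g ^ 2)

/-- `‖f‖_∞ = max_g f(g)` (for a function on a finite type). -/
noncomputable def supNorm {G : Type*} [Fintype G] (f : G → ℝ) : ℝ :=
  ⨆ g, f g

/-- The mass `η(gH) = ∑_{h ∈ H} η(g·h)` that `η` gives to the coset `gH`. -/
noncomputable def cosetMass {G : Type*} [Group G] [Fintype G] (η : G → ℝ) (g : G)
    (H : Subgroup G) : ℝ :=
  ∑ h : H, η (g * h)

/-- `η` is a probability measure on the finite group `G`: it is nonnegative and sums to 1. -/
def IsProbMeasure {G : Type*} [Group G] [Fintype G] (η : G → ℝ) : Prop :=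
  (∀ g, 0 ≤ η g) ∧ ∑ g, η g = 1

/-- `η` is symmetric: `η(g) = η(g⁻¹)` for all `g`. -/
def IsSymmetric {G : Type*} [Group G] (η : G → ℝ) : Prop :=
  ∀ g, η g = η g⁻¹

section AuxFlatten

variable {G : Type*} [Group G] [Fintype G]

lemma conv_delta (f g : G → ℝ) : conv f (iterConv g 0) = f := by
  funext x
  simp only [conv, iterConv, mul_ite, mul_one, mul_zero]
  simp only [inv_mul_eq_one]
  rw [Finset.sum_ite_eq' Finset.univ x f]
  simp

lemma delta_conv (f g : G → ℝ) : conv (iterConv g 0) f = f := by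
  funext x
  simp only [conv, iterConv, ite_mul, one_mul, zero_mul]
  rw [Finset.sum_ite_eq' Finset.univ (1:G) (fun h => f (h⁻¹ * x))]
  simp

lemma conv_assoc (f g h : G → ℝ) : conv (conv f g) h = conv f (conv g h) := by
  funext x
  simp only [conv, Finset.sum_mul, Finset.mul_sum]
  rw [Finset.sum_comm]
  apply Finset.sum_congr rfl
  intro b _
  rw [← Equiv.sum_comp (Equiv.mulLeft b⁻¹)
    (fun i => f b * (g i * h (i⁻¹ * (b⁻¹ * x))))]
  apply Finset.sum_congr rfl
  intro a _
  simp only [Equiv.coe_mulLeft, mul_inv_rev, inv_inv, mul_assoc, mul_inv_cancel_left]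

lemma iterConv_succ_left (f : G → ℝ) (n : ℕ) :
    iterConv f (n + 1) = conv f (iterConv f n) := by
  induction n with
  | zero => show conv (iterConv f 0) f = conv f (iterConv f 0); rw [conv_delta, delta_conv]
  | succ n ih =>
    show conv (iterConv f (n+1)) f = conv f (iterConv f (n+1))
    conv_lhs => rw [ih]
    rw [conv_assoc]
    rfl

lemma iterConv_add (f : G → ℝ) (m n : ℕ) :
    iterConv f (m + n) = conv (iterConv f m) (iterConv f n) := by
  induction n with
  | zero => simp only [Nat.add_zero]; rw [conv_delta]
  | succ n ih =>
    show conv (iterConv f (m + n)) f = _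
    conv_lhs => rw [ih]
    rw [conv_assoc]
    rfl

lemma conv_prob {f g : G → ℝ} (hf : IsProbMeasure f) (hg : IsProbMeasure g) :
    IsProbMeasure (conv f g) := by
  constructor
  · intro x
    exact Finset.sum_nonneg fun h _ => mul_nonneg (hf.1 h) (hg.1 _)
  · rw [show ∑ x, conv f g x = ∑ h, f h * ∑ x, g (h⁻¹ * x) by
      simp only [conv, Finset.mul_sum]; exact Finset.sum_comm]
    have : ∀ h : G, ∑ x, g (h⁻¹ * x) = 1 := by
      intro h
      rw [← hg.2]
      exact Equiv.sum_comp (Equiv.mulLeft h⁻¹) g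
    simp [this, hf.2]

lemma iterConv_prob {f : G → ℝ} (hf : IsProbMeasure f) (n : ℕ) :
    IsProbMeasure (iterConv f n) := by
  induction n with
  | zero =>
    constructor
    · intro g; dsimp [iterConv]; positivity
    · simp [iterConv]
  | succ n ih => exact conv_prob ih hf

lemma conv_inv {f g : G → ℝ} (hf : IsSymmetric f) (hg : IsSymmetric g) (x : G) :
    conv f g x⁻¹ = conv g f x := by
  unfold conv
  rw [← Equiv.sum_comp (Equiv.mulLeft x) (fun h => g h * f (h⁻¹ * x))]
  apply Finset.sum_congr rfl
  intro h _
  simp only [Equiv.coe_mulLeft, mul_inv_rev, inv_mul_cancel_right]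
  rw [← hf h, hg (x * h), mul_inv_rev, mul_comm]

lemma iterConv_symm {f : G → ℝ} (hf : IsSymmetric f) (n : ℕ) :
    IsSymmetric (iterConv f n) := by
  induction n with
  | zero => intro x; simp [iterConv, inv_eq_one]
  | succ n ih =>
    intro x
    show iterConv f (n+1) x = conv (iterConv f n) f x⁻¹
    rw [conv_inv ih hf, ← iterConv_succ_left]

lemma l2Norm_nonneg (f : G → ℝ) : 0 ≤ l2Norm f := Real.sqrt_nonneg _

lemma l2Norm_conv_le {f g : G → ℝ} (hf : IsProbMeasure f) :
    l2Norm (conv f g) ≤ l2Norm g := by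
  apply Real.sqrt_le_sqrt
  calc ∑ x, conv f g x ^ 2 ≤ ∑ x, ∑ h, f h * g (h⁻¹ * x) ^ 2 := by
        apply Finset.sum_le_sum
        intro x _
        have key := Finset.sum_sq_le_sum_mul_sum_of_sq_eq_mul Finset.univ
          (r := fun h => f h * g (h⁻¹ * x)) (f := f) (g := fun h => f h * g (h⁻¹ * x) ^ 2)
          (fun i _ => hf.1 i) (fun i _ => mul_nonneg (hf.1 i) (sq_nonneg _))
          (fun i _ => by ring)
        calc conv f g x ^ 2 = (∑ h, f h * g (h⁻¹ * x)) ^ 2 := rfl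
          _ ≤ (∑ h, f h) * ∑ h, f h * g (h⁻¹ * x) ^ 2 := key
          _ = ∑ h, f h * g (h⁻¹ * x) ^ 2 := by rw [hf.2, one_mul]
    _ = ∑ h, f h * ∑ x, g (h⁻¹ * x) ^ 2 := by
        rw [Finset.sum_comm]; simp [Finset.mul_sum]
    _ = ∑ x, g x ^ 2 := by
        have hre : ∀ h : G, ∑ x, g (h⁻¹ * x) ^ 2 = ∑ x, g x ^ 2 :=
          fun h => Equiv.sum_comp (Equiv.mulLeft h⁻¹) (fun x => g x ^ 2)
        simp only [hre, ← Finset.sum_mul, hf.2, one_mul]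

lemma cosetMass_conv_lt {ν η : G → ℝ} (hν : IsProbMeasure ν) {H : Subgroup G} {B : ℝ}
    (hη : ∀ g, cosetMass η g H < B) (g : G) : cosetMass (conv ν η) g H < B := by
  have key : cosetMass (conv ν η) g H = ∑ k, ν k * cosetMass η (k⁻¹ * g) H := by
    unfold cosetMass conv
    rw [Finset.sum_comm]
    simp [Finset.mul_sum, mul_assoc]
  rw [key]
  obtain ⟨k₀, -, hk₀⟩ : ∃ k ∈ Finset.univ, ν k ≠ 0 :=
    Finset.exists_ne_zero_of_sum_ne_zero (by rw [hν.2]; norm_num)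
  have hk₀' : 0 < ν k₀ := lt_of_le_of_ne (hν.1 k₀) (Ne.symm hk₀)
  calc ∑ k, ν k * cosetMass η (k⁻¹ * g) H < ∑ k, ν k * B := by
        apply Finset.sum_lt_sum
        · intro i _
          rcases eq_or_lt_of_le (hν.1 i) with h | h
          · rw [← h]; simp
          · exact mul_le_mul_of_nonneg_left (le_of_lt (hη _)) (le_of_lt h)
        · exact ⟨k₀, Finset.mem_univ k₀, mul_lt_mul_of_pos_left (hη _) hk₀'⟩
    _ = B := by rw [← Finset.sum_mul, hν.2, one_mul]

lemma le_cosetMass {η : G → ℝ} (hη : ∀ x, 0 ≤ η x) (g : G) (H : Subgroup G) :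
    η g ≤ cosetMass η g H := by
  unfold cosetMass
  have h := Finset.single_le_sum (f := fun h : H => η (g * h)) (fun i _ => hη _)
    (Finset.mem_univ (⟨1, H.one_mem⟩ : H))
  simpa using h

end AuxFlatten

/-- Iterating the `L²`-flattening lemma: if `c > 0` and `K₀` are absolute constants for
which the flattening lemma holds, `p` is a prime, `η` a symmetric probability measure on
`SL₂(𝔽_p)` and `K₀ ≤ K < p^{1/10}` with `η(gH) < K⁻¹` for all proper subgroups `H` and
all `g`, then `‖η^{(2^ℓ)}‖₂ ≤ K^{-cℓ}·‖η‖₂ + K·p^{-3/2}` for every `ℓ ∈ ℕ`. -/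
theorem iterated_l2_flattening
    (c : ℝ) (hc : 0 < c) (K₀ : ℝ)
    (hflat : ∀ (p : ℕ) [Fact p.Prime],
      ∀ η : Matrix.SpecialLinearGroup (Fin 2) (ZMod p) → ℝ,
        IsProbMeasure η → IsSymmetric η →
        ∀ K : ℝ, K₀ ≤ K → K < (p : ℝ) ^ ((1 : ℝ) / 10) →
          (∀ H : Subgroup (Matrix.SpecialLinearGroup (Fin 2) (ZMod p)), H ≠ ⊤ →
            ∀ g, cosetMass η g H < K⁻¹) →
          l2Norm η > K * (p : ℝ) ^ (-(3 : ℝ) / 2) →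
          l2Norm (conv η η) < K ^ (-c) * l2Norm η)
    (p : ℕ) [Fact p.Prime]
    (η : Matrix.SpecialLinearGroup (Fin 2) (ZMod p) → ℝ)
    (hη : IsProbMeasure η) (hsym : IsSymmetric η)
    (K : ℝ) (hK₀ : K₀ ≤ K) (hK : K < (p : ℝ) ^ ((1 : ℝ) / 10))
    (hcoset : ∀ H : Subgroup (Matrix.SpecialLinearGroup (Fin 2) (ZMod p)), H ≠ ⊤ →
      ∀ g, cosetMass η g H < K⁻¹) :
    ∀ ℓ : ℕ, l2Norm (iterConv η (2 ^ ℓ)) ≤ K ^ (-(c * ℓ)) * l2Norm η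
      + K * (p : ℝ) ^ (-(3 : ℝ) / 2) := by
  have hnt : Nontrivial (Matrix.SpecialLinearGroup (Fin 2) (ZMod p)) := by
    refine ⟨⟨⟨!![1,1;0,1], by simp [Matrix.det_fin_two_of]⟩, 1, fun h => ?_⟩⟩
    have h2 := congrArg (fun M : Matrix.SpecialLinearGroup (Fin 2) (ZMod p) =>
      (M : Matrix (Fin 2) (Fin 2) (ZMod p)) 0 1) h
    simp at h2
  have hbt : (⊥ : Subgroup (Matrix.SpecialLinearGroup (Fin 2) (ZMod p))) ≠ ⊤ := by
    intro h
    obtain ⟨g, hg⟩ := exists_ne (1 : Matrix.SpecialLinearGroup (Fin 2) (ZMod p))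
    exact hg (Subgroup.mem_bot.1 (h ▸ Subgroup.mem_top g))
  have hKpos : 0 < K := by
    have h1 : (0 : ℝ) < K⁻¹ :=
      lt_of_le_of_lt (le_trans (hη.1 1) (le_cosetMass hη.1 1 ⊥)) (hcoset ⊥ hbt 1)
    exact inv_pos.1 h1
  have hp32 : (0 : ℝ) ≤ K * (p : ℝ) ^ (-(3 : ℝ) / 2) :=
    mul_nonneg hKpos.le (Real.rpow_nonneg (Nat.cast_nonneg p) _)
  have hl2η : 0 ≤ l2Norm η := l2Norm_nonneg η
  have hpow : ∀ ℓ : ℕ, ∃ m, 2 ^ ℓ = m + 1 :=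
    fun ℓ => ⟨2 ^ ℓ - 1, by have := Nat.one_le_two_pow (n := ℓ); omega⟩
  intro ℓ
  by_cases hK1 : 1 < K
  · induction ℓ with
    | zero =>
      have h1 : iterConv η (2 ^ 0) = η := by
        show conv (iterConv η 0) η = η
        exact delta_conv η η
      rw [h1]
      simp only [Nat.cast_zero, mul_zero, neg_zero, Real.rpow_zero, one_mul]
      exact le_add_of_nonneg_right hp32
    | succ ℓ ih =>
      set μ := iterConv η (2 ^ ℓ) with hμ
      have hμprob : IsProbMeasure μ := iterConv_prob hη _
      have hμsym : IsSymmetric μ := iterConv_symm hsym _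
      have h2 : iterConv η (2 ^ (ℓ + 1)) = conv μ μ := by
        rw [pow_succ, Nat.mul_two, iterConv_add]
      rw [h2]
      by_cases hbig : l2Norm μ > K * (p : ℝ) ^ (-(3 : ℝ) / 2)
      · have hμcoset : ∀ H : Subgroup (Matrix.SpecialLinearGroup (Fin 2) (ZMod p)),
            H ≠ ⊤ → ∀ g, cosetMass μ g H < K⁻¹ := by
          intro H hH g
          obtain ⟨m, hm⟩ := hpow ℓ
          rw [hμ, hm]
          exact cosetMass_conv_lt (iterConv_prob hη m) (hcoset H hH) g
        have hfl := hflat p μ hμprob hμsym K hK₀ hK hμcoset hbig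
        have hcnn : (0 : ℝ) ≤ K ^ (-c) := (Real.rpow_pos_of_pos hKpos _).le
        have hstep : K ^ (-c) * l2Norm μ ≤
            K ^ (-c) * (K ^ (-(c * ℓ)) * l2Norm η + K * (p : ℝ) ^ (-(3 : ℝ) / 2)) :=
          mul_le_mul_of_nonneg_left ih hcnn
        have hexp : K ^ (-c) * K ^ (-(c * (ℓ : ℝ))) = K ^ (-(c * ((ℓ : ℕ) + 1 : ℕ) : ℝ)) := by
          rw [← Real.rpow_add hKpos]
          push_cast
          ring_nf
        have hle1 : K ^ (-c) ≤ 1 :=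
          Real.rpow_le_one_of_one_le_of_nonpos hK1.le (neg_nonpos.2 hc.le)
        have htail : K ^ (-c) * (K * (p : ℝ) ^ (-(3 : ℝ) / 2)) ≤ K * (p : ℝ) ^ (-(3 : ℝ) / 2) :=
          mul_le_of_le_one_left hp32 hle1
        calc l2Norm (conv μ μ) ≤ K ^ (-c) * l2Norm μ := hfl.le
          _ ≤ K ^ (-c) * (K ^ (-(c * ℓ)) * l2Norm η + K * (p : ℝ) ^ (-(3 : ℝ) / 2)) := hstep
          _ = K ^ (-(c * ((ℓ : ℕ) + 1 : ℕ) : ℝ)) * l2Norm η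
              + K ^ (-c) * (K * (p : ℝ) ^ (-(3 : ℝ) / 2)) := by
            rw [mul_add, ← mul_assoc, hexp]
          _ ≤ K ^ (-(c * ((ℓ : ℕ) + 1 : ℕ) : ℝ)) * l2Norm η
              + K * (p : ℝ) ^ (-(3 : ℝ) / 2) := by linarith
      · push_neg at hbig
        have hnn : 0 ≤ K ^ (-(c * ((ℓ : ℕ) + 1 : ℕ) : ℝ)) * l2Norm η :=
          mul_nonneg (Real.rpow_pos_of_pos hKpos _).le hl2η
        calc l2Norm (conv μ μ) ≤ l2Norm μ := l2Norm_conv_le hμprob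
          _ ≤ K * (p : ℝ) ^ (-(3 : ℝ) / 2) := hbig
          _ ≤ _ := le_add_of_nonneg_left hnn
  · push_neg at hK1
    obtain ⟨m, hm⟩ := hpow ℓ
    have hle : l2Norm (iterConv η (2 ^ ℓ)) ≤ l2Norm η := by
      rw [hm]
      exact l2Norm_conv_le (iterConv_prob hη m)
    have hone : (1 : ℝ) ≤ K ^ (-(c * (ℓ : ℝ))) := by
      apply Real.one_le_rpow_of_pos_of_le_one_of_nonpos hKpos hK1
      have : 0 ≤ c * (ℓ : ℝ) := mul_nonneg hc.le (Nat.cast_nonneg ℓ)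
      linarith
    calc l2Norm (iterConv η (2 ^ ℓ)) ≤ l2Norm η := hle
      _ ≤ K ^ (-(c * (ℓ : ℝ))) * l2Norm η := le_mul_of_one_le_left hl2η hone
      _ ≤ _ := le_add_of_nonneg_right hp32
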